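/- Let αₙ(ε) for n = 1,…,N(ε) be real numbers with |αₙ(ε)| ≤ C uniformly, N(ε) = ⌊M/ε⌋, and suppose the measures μ_ε := ε Σₙ δ_{αₙ(ε)} converge weak-* to an absolutely continuous measure G(α)dα with G ∈ L¹. Then ε Σ_{n=1}^{N(ε)} 2 arctan(ε⁻¹ αₙ(ε)) → ∫_ℝ π sgn(α) G(α) dα as ε ↓ 0. -/

import Mathlib

open MeasureTheory Filter

private lemma zd_measurable_sign : Measurable Real.sign := by
  unfold Real.sign
  exact Measurable.ite (measurableSet_lt measurable_id measurable_const)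
    measurable_const (Measurable.ite (measurableSet_lt measurable_const measurable_id)
    measurable_const measurable_const)

private lemma zd_abs_sign_le (x : ℝ) : |Real.sign x| ≤ 1 := by
  rcases lt_trichotomy x 0 with h | h | h
  · simp [Real.sign_of_neg h]
  · simp [h, Real.sign_zero]
  · simp [Real.sign_of_pos h]

private lemma zd_abs_two_arctan_le (t : ℝ) : |2 * Real.arctan t| ≤ Real.pi := by
  have h1 := Real.arctan_lt_pi_div_two t
  have h2 := Real.neg_pi_div_two_lt_arctan t
  have h3 : |Real.arctan t| ≤ Real.pi/2 := le_of_lt (abs_lt.2 ⟨h2, h1⟩)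
  rw [abs_mul, abs_two]
  linarith

private lemma zd_shrinkA (G : ℝ → ℝ) (hG : Integrable G) :
    Tendsto (fun n : ℕ => ∫ x in Set.Icc (-(1/(n+1):ℝ)) (1/(n+1)), |G x|) atTop (nhds 0) := by
  have hmeas : ∀ n : ℕ, MeasurableSet (Set.Icc (-(1/(n+1):ℝ)) (1/(n+1))) := fun n => measurableSet_Icc
  have key : Tendsto (fun n : ℕ => ∫ x, (Set.Icc (-(1/(n+1):ℝ)) (1/(n+1))).indicator (fun x => |G x|) x)
      atTop (nhds (∫ _x : ℝ, (0:ℝ))) := by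
    apply tendsto_integral_of_dominated_convergence (fun x => |G x|)
    · exact fun n => (hG.1.norm.indicator (hmeas n)).congr (by
        simp [Real.norm_eq_abs])
    · exact hG.abs
    · intro n
      filter_upwards with x
      rw [Real.norm_eq_abs, Set.indicator_apply]
      split_ifs <;> simp [abs_abs, abs_nonneg]
    · have h0 : ∀ᵐ x : ℝ, x ≠ 0 := by
        rw [ae_iff]
        simpa using Real.volume_singleton (a := 0)
      filter_upwards [h0] with x hx
      have : ∀ᶠ n : ℕ in atTop, (Set.Icc (-(1/(n+1):ℝ)) (1/(n+1))).indicator (fun x => |G x|) x = 0 := by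
        have hax : 0 < |x| := abs_pos.2 hx
        have : ∀ᶠ n : ℕ in atTop, (1:ℝ)/(n+1) < |x| := by
          have : Tendsto (fun n : ℕ => (1:ℝ)/((n:ℝ)+1)) atTop (nhds 0) := tendsto_one_div_add_atTop_nhds_zero_nat
          exact this.eventually_lt_const hax
        filter_upwards [this] with n hn
        apply Set.indicator_of_notMem
        intro hmem
        rcases hmem with ⟨h1, h2⟩
        rcases abs_cases x with ⟨he, _⟩ | ⟨he, _⟩
        · exact absurd (he ▸ h2) (not_le.2 (he ▸ hn))
        · nlinarith [hn]
      exact Tendsto.congr' (this.mono fun n h => h.symm) tendsto_const_nhds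
  simp only [integral_zero] at key
  exact key.congr fun n => integral_indicator (hmeas n)

private lemma zd_tailB (G : ℝ → ℝ) (hG : Integrable G) :
    Tendsto (fun n : ℕ => ∫ x in {x : ℝ | (n:ℝ) < |x|}, |G x|) atTop (nhds 0) := by
  have hmeas : ∀ n : ℕ, MeasurableSet {x : ℝ | (n:ℝ) < |x|} := fun n =>
    (isOpen_lt continuous_const continuous_abs).measurableSet
  have key : Tendsto (fun n : ℕ => ∫ x, ({x : ℝ | (n:ℝ) < |x|}).indicator (fun x => |G x|) x)
      atTop (nhds (∫ _x : ℝ, (0:ℝ))) := by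
    apply tendsto_integral_of_dominated_convergence (fun x => |G x|)
    · exact fun n => (hG.1.norm.indicator (hmeas n)).congr (by simp [Real.norm_eq_abs])
    · exact hG.abs
    · intro n
      filter_upwards with x
      rw [Real.norm_eq_abs, Set.indicator_apply]
      split_ifs <;> simp [abs_abs, abs_nonneg]
    · filter_upwards with x
      have : ∀ᶠ n : ℕ in atTop, ({x : ℝ | (n:ℝ) < |x|}).indicator (fun x => |G x|) x = 0 := by
        have : ∀ᶠ n : ℕ in atTop, |x| ≤ (n:ℝ) := by
          obtain ⟨m, hm⟩ := exists_nat_ge |x|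
          filter_upwards [eventually_ge_atTop m] with n hn
          exact hm.trans (by exact_mod_cast hn)
        filter_upwards [this] with n hn
        exact Set.indicator_of_notMem (by simpa using hn) _
      exact Tendsto.congr' (this.mono fun n h => h.symm) tendsto_const_nhds
  simp only [integral_zero] at key
  exact key.congr fun n => integral_indicator (hmeas n)

set_option maxHeartbeats 1000000 in
/-- Abstract core of the zero-dispersion limit of `Ũ = ε Σ 2 arctan(ε⁻¹αₙ)`:
if `αₙ(ε)`, `n = 1, …, N(ε) = ⌊M/ε⌋`, are uniformly bounded by `C` and the measures
`μ_ε = ε Σₙ δ_{αₙ(ε)}` converge weak-* (tested against continuous compactly supported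
functions) to the absolutely continuous measure `G(α)dα` with `G ∈ L¹`, then
`ε Σₙ 2 arctan(ε⁻¹ αₙ(ε)) → ∫ π sgn(α) G(α) dα` as `ε ↓ 0`. -/

theorem zero_dispersion_limit_of_U
    (M C : ℝ) (hM : 0 < M) (hC : 0 < C)
    (a : ℝ → ℕ → ℝ) (G : ℝ → ℝ) (hG : Integrable G)
    (hbound : ∀ ε ∈ Set.Ioi (0:ℝ), ∀ n < Nat.floor (M / ε), |a ε n| ≤ C)
    (hweak : ∀ f : ℝ → ℝ, Continuous f → HasCompactSupport f →
      Tendsto (fun ε : ℝ => ε * ∑ n ∈ Finset.range (Nat.floor (M / ε)), f (a ε n))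
        (nhdsWithin 0 (Set.Ioi 0)) (nhds (∫ α, f α * G α))) :
    Tendsto (fun ε : ℝ =>
        ε * ∑ n ∈ Finset.range (Nat.floor (M / ε)), 2 * Real.arctan (ε⁻¹ * a ε n))
      (nhdsWithin 0 (Set.Ioi 0))
      (nhds (∫ α, Real.pi * Real.sign α * G α)) := by
  have pi_pos := Real.pi_pos
  rw [Metric.tendsto_nhds]
  intro η hη
  have hη100 : (0:ℝ) < η/100 := by positivity
  -- choose δ
  obtain ⟨k, hk⟩ := ((zd_shrinkA G hG).eventually_lt_const hη100).exists
  set δ : ℝ := 1/(2*((k:ℝ)+1)) with hδdef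
  have hδ : 0 < δ := by positivity
  have h2δ : 2*δ = 1/((k:ℝ)+1) := by rw [hδdef]; field_simp
  have hIcc : ∫ x in Set.Icc (-(2*δ)) (2*δ), |G x| < η/100 := by rw [h2δ]; exact hk
  -- choose R
  obtain ⟨m, hm1, hm2⟩ := (((zd_tailB G hG).eventually_lt_const hη100).and
    (eventually_ge_atTop ⌈C⌉₊)).exists
  set R : ℝ := (m:ℝ) with hRdef
  have hCR : C ≤ R := (Nat.le_ceil C).trans (by rw [hRdef]; exact_mod_cast hm2)
  have htail : ∫ x in {x : ℝ | R < |x|}, |G x| < η/100 := hm1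
  -- test functions
  set f : ℝ → ℝ := fun x => Real.pi * (min 1 (max (-1) (x/δ))) * (max 0 (min 1 (R+1 - |x|)))
    with hfdef
  set h : ℝ → ℝ := fun x => max 0 (min 1 (2 - |x|/δ)) with hhdef
  have hf_cont : Continuous f := by rw [hfdef]; fun_prop
  have hh_cont : Continuous h := by rw [hhdef]; fun_prop
  have hf_cs : HasCompactSupport f := by
    apply HasCompactSupport.intro (isCompact_Icc (a := -(R+1)) (b := R+1))
    intro x hx
    have : R+1 < |x| := by
      rcases abs_cases x with ⟨he, _⟩ | ⟨he, _⟩ <;>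
        (simp only [Set.mem_Icc, not_and_or, not_le] at hx; rcases hx with hx | hx <;> linarith)
    have : min 1 (R+1 - |x|) ≤ 0 := (min_le_right _ _).trans (by linarith)
    simp only [hfdef]
    rw [max_eq_left this, mul_zero]
  have hh_cs : HasCompactSupport h := by
    apply HasCompactSupport.intro (isCompact_Icc (a := -(2*δ)) (b := 2*δ))
    intro x hx
    have h2 : 2*δ < |x| := by
      rcases abs_cases x with ⟨he, _⟩ | ⟨he, _⟩ <;>
        (simp only [Set.mem_Icc, not_and_or, not_le] at hx; rcases hx with hx | hx <;> linarith)
    have : (2 - |x|/δ) ≤ 0 := by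
      rw [sub_nonpos, le_div_iff₀ hδ]; linarith
    have : min 1 (2 - |x|/δ) ≤ 0 := (min_le_right _ _).trans this
    simp only [hhdef]
    rw [max_eq_left this]
  have hh_mem : ∀ x : ℝ, 0 ≤ h x ∧ h x ≤ 1 := fun x =>
    ⟨le_max_left _ _, max_le (by norm_num) (min_le_left _ _)⟩
  have hh_one : ∀ x : ℝ, |x| ≤ δ → h x = 1 := by
    intro x hx
    have : (1:ℝ) ≤ 2 - |x|/δ := by
      have : |x|/δ ≤ 1 := (div_le_one hδ).2 hx
      linarith
    simp only [hhdef]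
    rw [min_eq_left this, max_eq_right zero_le_one]
  have hh_zero : ∀ x : ℝ, 2*δ < |x| → h x = 0 := by
    intro x hx
    have : min 1 (2 - |x|/δ) ≤ 0 := (min_le_right _ _).trans (by
      rw [sub_nonpos, le_div_iff₀ hδ]; linarith)
    simp only [hhdef]
    rw [max_eq_left this]
  have hf_bd : ∀ x : ℝ, |f x| ≤ Real.pi := by
    intro x
    have hm1 : |min 1 (max (-1) (x/δ))| ≤ 1 := by
      rw [abs_le]
      exact ⟨le_min (by norm_num) (le_max_left _ _), min_le_left _ _⟩
    have hm2 : |max 0 (min 1 (R+1 - |x|))| ≤ 1 := by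
      rw [abs_le]
      constructor
      · exact le_trans (by norm_num) (le_max_left _ _)
      · exact max_le zero_le_one (min_le_left _ _)
    simp only [hfdef]
    calc |Real.pi * min 1 (max (-1) (x/δ)) * max 0 (min 1 (R+1 - |x|))|
        = Real.pi * |min 1 (max (-1) (x/δ))| * |max 0 (min 1 (R+1 - |x|))| := by
          rw [abs_mul, abs_mul, abs_of_pos pi_pos]
      _ ≤ Real.pi * 1 * 1 := by
          apply mul_le_mul _ hm2 (abs_nonneg _) (by positivity)
          exact mul_le_mul_of_nonneg_left hm1 (le_of_lt pi_pos)
      _ = Real.pi := by ring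
  have hf_eq : ∀ x : ℝ, δ ≤ |x| → |x| ≤ R → f x = Real.pi * Real.sign x := by
    intro x h1 h2
    have hcut : max 0 (min 1 (R+1 - |x|)) = 1 := by
      rw [min_eq_left (by linarith), max_eq_right zero_le_one]
    simp only [hfdef]
    rw [hcut, mul_one]
    rcases lt_trichotomy x 0 with hx | hx | hx
    · have : |x| = -x := abs_of_neg hx
      have hxd : x/δ ≤ -1 := by
        rw [div_le_iff₀ hδ]; linarith
      rw [Real.sign_of_neg hx, max_eq_left hxd, min_eq_right (by norm_num : (-1:ℝ) ≤ 1)]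
    · exfalso; rw [hx] at h1; simp at h1; linarith
    · have : |x| = x := abs_of_pos hx
      have hxd : (1:ℝ) ≤ x/δ := by
        rw [le_div_iff₀ hδ]; linarith
      rw [Real.sign_of_pos hx, max_eq_right (by linarith : (-1:ℝ) ≤ x/δ), min_eq_left hxd]
  -- integrability facts
  have hsgnG : Integrable (fun α => Real.pi * Real.sign α * G α) :=
    hG.bdd_mul ((zd_measurable_sign.const_mul Real.pi).aestronglyMeasurable)
      (c := Real.pi) (ae_of_all _ fun x => by
        rw [Real.norm_eq_abs, abs_mul, abs_of_pos pi_pos]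
        nlinarith [zd_abs_sign_le x, abs_nonneg (Real.sign x)])
  have hfG : Integrable (fun α => f α * G α) :=
    hG.bdd_mul hf_cont.aestronglyMeasurable (c := Real.pi) (ae_of_all _ fun x => by
      rw [Real.norm_eq_abs]; exact hf_bd x)
  have hhG : Integrable (fun α => h α * G α) :=
    hG.bdd_mul hh_cont.aestronglyMeasurable (c := 1) (ae_of_all _ fun x => by
      rw [Real.norm_eq_abs, abs_of_nonneg (hh_mem x).1]; exact (hh_mem x).2)
  have hind1 : Integrable ((Set.Icc (-(2*δ)) (2*δ)).indicator fun x => |G x|) :=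
    hG.abs.indicator measurableSet_Icc
  have hind2 : Integrable (({x : ℝ | R < |x|}).indicator fun x => |G x|) :=
    hG.abs.indicator (isOpen_lt continuous_const continuous_abs).measurableSet
  -- bound ∫ h G
  have hIh : ∫ α, h α * G α ≤ ∫ x in Set.Icc (-(2*δ)) (2*δ), |G x| := by
    rw [← integral_indicator measurableSet_Icc]
    apply integral_mono hhG hind1
    intro x
    by_cases hx : x ∈ Set.Icc (-(2*δ)) (2*δ)
    · rw [Set.indicator_of_mem hx]
      calc h x * G x ≤ h x * |G x| :=
            mul_le_mul_of_nonneg_left (le_abs_self _) (hh_mem x).1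
        _ ≤ 1 * |G x| := mul_le_mul_of_nonneg_right (hh_mem x).2 (abs_nonneg _)
        _ = |G x| := one_mul _
    · have hx2 : 2*δ < |x| := by
        rcases abs_cases x with ⟨he, _⟩ | ⟨he, _⟩ <;>
          (simp only [Set.mem_Icc, not_and_or, not_le] at hx; rcases hx with hx | hx <;> linarith)
      rw [Set.indicator_of_notMem hx]
      simp only [hh_zero x hx2, zero_mul, le_refl]
  -- bound |∫ f G - ∫ π sign G|
  have hfar : |(∫ α, f α * G α) - ∫ α, Real.pi * Real.sign α * G α| < η/4 := by
    have hptw : ∀ x : ℝ, |f x * G x - Real.pi * Real.sign x * G x| ≤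
        2*Real.pi * ((Set.Icc (-(2*δ)) (2*δ)).indicator (fun x => |G x|) x)
        + 2*Real.pi * (({x : ℝ | R < |x|}).indicator (fun x => |G x|) x) := by
      intro x
      have hnn1 : 0 ≤ (Set.Icc (-(2*δ)) (2*δ)).indicator (fun x => |G x|) x :=
        Set.indicator_nonneg (fun x _ => abs_nonneg _) x
      have hnn2 : 0 ≤ ({x : ℝ | R < |x|}).indicator (fun x => |G x|) x :=
        Set.indicator_nonneg (fun x _ => abs_nonneg _) x
      have hbig : |f x * G x - Real.pi * Real.sign x * G x| ≤ 2*Real.pi * |G x| := by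
        calc |f x * G x - Real.pi * Real.sign x * G x|
            = |f x - Real.pi * Real.sign x| * |G x| := by
              rw [show f x * G x - Real.pi * Real.sign x * G x
                = (f x - Real.pi * Real.sign x) * G x by ring, abs_mul]
          _ ≤ 2*Real.pi * |G x| := by
              apply mul_le_mul_of_nonneg_right _ (abs_nonneg _)
              calc |f x - Real.pi * Real.sign x| ≤ |f x| + |Real.pi * Real.sign x| := abs_sub _ _
                _ ≤ Real.pi + Real.pi := by
                    apply add_le_add (hf_bd x)
                    rw [abs_mul, abs_of_pos pi_pos]
                    nlinarith [zd_abs_sign_le x, abs_nonneg (Real.sign x)]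
                _ = 2*Real.pi := by ring
      by_cases hx1 : |x| ≤ 2*δ
      · have hmem : x ∈ Set.Icc (-(2*δ)) (2*δ) := by
          rw [Set.mem_Icc]; constructor <;> [skip; exact le_of_abs_le hx1]
          rcases abs_cases x with ⟨he, _⟩ | ⟨he, _⟩ <;> linarith
        rw [Set.indicator_of_mem hmem]
        nlinarith
      · push_neg at hx1
        by_cases hx2 : |x| ≤ R
        · have : f x = Real.pi * Real.sign x := hf_eq x (by linarith) hx2
          rw [this, sub_self, abs_zero]
          positivity
        · push_neg at hx2
          have hmem : x ∈ {x : ℝ | R < |x|} := hx2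
          rw [Set.indicator_of_mem hmem]
          nlinarith
    calc |(∫ α, f α * G α) - ∫ α, Real.pi * Real.sign α * G α|
        = |∫ α, (f α * G α - Real.pi * Real.sign α * G α)| := by
          rw [integral_sub hfG hsgnG]
      _ ≤ ∫ α, |f α * G α - Real.pi * Real.sign α * G α| := by
          simpa [Real.norm_eq_abs] using
            norm_integral_le_integral_norm (fun α => f α * G α - Real.pi * Real.sign α * G α)
      _ ≤ ∫ α, (2*Real.pi * ((Set.Icc (-(2*δ)) (2*δ)).indicator (fun x => |G x|) α)
            + 2*Real.pi * (({x : ℝ | R < |x|}).indicator (fun x => |G x|) α)) := by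
          apply integral_mono (hfG.sub hsgnG).abs
            ((hind1.const_mul _).add (hind2.const_mul _)) hptw
      _ = 2*Real.pi * (∫ x in Set.Icc (-(2*δ)) (2*δ), |G x|)
            + 2*Real.pi * (∫ x in {x : ℝ | R < |x|}, |G x|) := by
          rw [integral_add (hind1.const_mul _) (hind2.const_mul _),
            integral_const_mul, integral_const_mul,
            integral_indicator measurableSet_Icc,
            integral_indicator (isOpen_lt continuous_const continuous_abs).measurableSet]
      _ < 2*Real.pi * (η/100) + 2*Real.pi * (η/100) := by
          exact add_lt_add (mul_lt_mul_of_pos_left hIcc (by positivity))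
            (mul_lt_mul_of_pos_left htail (by positivity))
      _ < η/4 := by
          have hp : Real.pi < 3.15 := Real.pi_lt_d2
          nlinarith [mul_pos pi_pos hη]
  -- eventual facts
  have E1 : ∀ᶠ ε in nhdsWithin (0:ℝ) (Set.Ioi 0),
      |(ε * ∑ n ∈ Finset.range (Nat.floor (M / ε)), f (a ε n)) - ∫ α, f α * G α| < η/4 := by
    have := Metric.tendsto_nhds.mp (hweak f hf_cont hf_cs) (η/4) (by positivity)
    simpa [Real.dist_eq] using this
  have E2 : ∀ᶠ ε in nhdsWithin (0:ℝ) (Set.Ioi 0),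
      (ε * ∑ n ∈ Finset.range (Nat.floor (M / ε)), h (a ε n)) < η/50 := by
    apply (hweak h hh_cont hh_cs).eventually_lt_const
    calc ∫ α, h α * G α ≤ ∫ x in Set.Icc (-(2*δ)) (2*δ), |G x| := hIh
      _ < η/100 := hIcc
      _ < η/50 := by linarith
  have E3 : ∀ᶠ ε in nhdsWithin (0:ℝ) (Set.Ioi 0),
      M * (Real.pi - 2 * Real.arctan (ε⁻¹ * δ)) < η/4 := by
    have h1 : Tendsto (fun ε : ℝ => ε⁻¹ * δ) (nhdsWithin 0 (Set.Ioi 0)) atTop := by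
      have := tendsto_inv_nhdsGT_zero.atTop_mul_const hδ
      simpa [mul_comm] using this
    have h2 : Tendsto (fun ε : ℝ => Real.arctan (ε⁻¹ * δ)) (nhdsWithin (0:ℝ) (Set.Ioi 0))
        (nhds (Real.pi/2)) :=
      (Real.tendsto_arctan_atTop.mono_right nhdsWithin_le_nhds).comp h1
    have h3 := ((tendsto_const_nhds (x := Real.pi)
      (f := nhdsWithin (0:ℝ) (Set.Ioi 0))).sub (h2.const_mul 2)).const_mul M
    have h4 : M * (Real.pi - 2 * (Real.pi/2)) = 0 := by ring
    rw [h4] at h3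
    exact h3.eventually_lt_const (by positivity)
  -- conclude
  filter_upwards [E1, E2, E3, self_mem_nhdsWithin] with ε h1 h2 h3 hε
  have hε' : (0:ℝ) < ε := hε
  set N := Nat.floor (M / ε) with hNdef
  have hr0 : 0 ≤ Real.pi - 2 * Real.arctan (ε⁻¹ * δ) := by
    have := Real.arctan_lt_pi_div_two (ε⁻¹ * δ); linarith
  -- pointwise bound
  have hpt : ∀ x : ℝ, |x| ≤ C →
      |2 * Real.arctan (ε⁻¹ * x) - f x| ≤
        (Real.pi - 2 * Real.arctan (ε⁻¹ * δ)) + 2*Real.pi * h x := by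
    intro x hx
    by_cases hcase : |x| ≤ δ
    · have := hh_one x hcase
      rw [this]
      calc |2 * Real.arctan (ε⁻¹ * x) - f x| ≤ |2 * Real.arctan (ε⁻¹ * x)| + |f x| := abs_sub _ _
        _ ≤ Real.pi + Real.pi := add_le_add (zd_abs_two_arctan_le _) (hf_bd x)
        _ ≤ (Real.pi - 2 * Real.arctan (ε⁻¹ * δ)) + 2*Real.pi * 1 := by linarith
    · push_neg at hcase
      have hxR : |x| ≤ R := hx.trans hCR
      have hfx := hf_eq x (le_of_lt hcase) hxR
      have hhx : 0 ≤ h x := (hh_mem x).1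
      have harc := zd_abs_two_arctan_le (ε⁻¹ * x)
      rcases lt_trichotomy x 0 with hx0 | hx0 | hx0
      · have hax : |x| = -x := abs_of_neg hx0
        rw [hfx, Real.sign_of_neg hx0]
        have hmono : Real.arctan (ε⁻¹ * δ) ≤ Real.arctan (ε⁻¹ * (-x)) := by
          apply Real.arctan_strictMono.monotone
          apply mul_le_mul_of_nonneg_left _ (le_of_lt (inv_pos.2 hε'))
          linarith
        rw [show ε⁻¹ * (-x) = -(ε⁻¹ * x) by ring, Real.arctan_neg] at hmono
        have habs := abs_le.1 harc
        rw [abs_le]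
        constructor <;> nlinarith
      · exfalso; rw [hx0] at hcase; simp at hcase; linarith
      · have hax : |x| = x := abs_of_pos hx0
        rw [hfx, Real.sign_of_pos hx0]
        have hmono : Real.arctan (ε⁻¹ * δ) ≤ Real.arctan (ε⁻¹ * x) := by
          apply Real.arctan_strictMono.monotone
          apply mul_le_mul_of_nonneg_left _ (le_of_lt (inv_pos.2 hε'))
          linarith
        have habs := abs_le.1 harc
        rw [abs_le]
        constructor <;> nlinarith
  -- sum estimate
  have hεN : ε * (N:ℝ) ≤ M := by
    calc ε * (N:ℝ) ≤ ε * (M/ε) := by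
          apply mul_le_mul_of_nonneg_left _ (le_of_lt hε')
          exact Nat.floor_le (by positivity)
      _ = M := by field_simp
  have hkey : |(ε * ∑ n ∈ Finset.range N, 2 * Real.arctan (ε⁻¹ * a ε n))
      - ε * ∑ n ∈ Finset.range N, f (a ε n)| ≤
      M * (Real.pi - 2 * Real.arctan (ε⁻¹ * δ))
      + 2*Real.pi * (ε * ∑ n ∈ Finset.range N, h (a ε n)) := by
    rw [← mul_sub, ← Finset.sum_sub_distrib, abs_mul, abs_of_pos hε']
    have hsum : |∑ n ∈ Finset.range N, (2 * Real.arctan (ε⁻¹ * a ε n) - f (a ε n))| ≤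
        ∑ n ∈ Finset.range N, ((Real.pi - 2 * Real.arctan (ε⁻¹ * δ)) + 2*Real.pi * h (a ε n)) := by
      refine (Finset.abs_sum_le_sum_abs _ _).trans (Finset.sum_le_sum ?_)
      intro n hn
      exact hpt (a ε n) (hbound ε hε n (Finset.mem_range.1 hn))
    calc ε * |∑ n ∈ Finset.range N, (2 * Real.arctan (ε⁻¹ * a ε n) - f (a ε n))|
        ≤ ε * ∑ n ∈ Finset.range N, ((Real.pi - 2 * Real.arctan (ε⁻¹ * δ)) + 2*Real.pi * h (a ε n)) :=
          mul_le_mul_of_nonneg_left hsum (le_of_lt hε')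
      _ = ε * (N:ℝ) * (Real.pi - 2 * Real.arctan (ε⁻¹ * δ))
          + 2*Real.pi * (ε * ∑ n ∈ Finset.range N, h (a ε n)) := by
          rw [Finset.sum_add_distrib, Finset.sum_const, Finset.card_range, ← Finset.mul_sum]
          push_cast
          ring
      _ ≤ M * (Real.pi - 2 * Real.arctan (ε⁻¹ * δ))
          + 2*Real.pi * (ε * ∑ n ∈ Finset.range N, h (a ε n)) := by
          apply add_le_add_left
          exact mul_le_mul_of_nonneg_right hεN hr0
  -- finish
  rw [Real.dist_eq]
  have h2' : 2*Real.pi * (ε * ∑ n ∈ Finset.range N, h (a ε n)) < 2*Real.pi * (η/50) :=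
    mul_lt_mul_of_pos_left h2 (by positivity)
  have ht1 := abs_sub_le (ε * ∑ n ∈ Finset.range N, 2 * Real.arctan (ε⁻¹ * a ε n))
    (ε * ∑ n ∈ Finset.range N, f (a ε n)) (∫ α, Real.pi * Real.sign α * G α)
  have ht2 := abs_sub_le (ε * ∑ n ∈ Finset.range N, f (a ε n))
    (∫ α, f α * G α) (∫ α, Real.pi * Real.sign α * G α)
  have hp : Real.pi < 3.15 := Real.pi_lt_d2
  have h2'' : 2*Real.pi*(η/50) < η/4 := by nlinarith
  linarith
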